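/- Eigenvector scaling lemma (Barth). Let n ≥ 1, let A be a real n×n matrix that is diagonalizable over ℝ, say A = R·Λ·R⁻¹ with R invertible and Λ diagonal with real entries, and let B be a real symmetric positive definite n×n matrix such that A·B is symmetric. Then there exists a real n×n matrix T which is symmetric, invertible, and commutes with Λ (so T is block diagonal with respect to the eigenspaces of Λ), such that with R̃ = R·T one has B = R̃·R̃ᵀ and A = R̃·Λ·R̃⁻¹; consequently A·B = R̃·Λ·R̃ᵀ. -/

import Mathlib

open Matrix

noncomputable def Matrix.PosSemidef.sqrt {n : ℕ} {M : Matrix (Fin n) (Fin n) ℝ}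
    (hM : M.PosSemidef) : Matrix (Fin n) (Fin n) ℝ :=
  (hM.1.eigenvectorUnitary : Matrix (Fin n) (Fin n) ℝ) * diagonal (Real.sqrt ∘ hM.1.eigenvalues) *
    star (hM.1.eigenvectorUnitary : Matrix (Fin n) (Fin n) ℝ)

theorem Matrix.PosSemidef.sqrt_mul_self {n : ℕ} {M : Matrix (Fin n) (Fin n) ℝ}
    (hM : M.PosSemidef) : hM.sqrt * hM.sqrt = M := by
  have hU1 : star (hM.1.eigenvectorUnitary : Matrix (Fin n) (Fin n) ℝ) *
      (hM.1.eigenvectorUnitary : Matrix (Fin n) (Fin n) ℝ) = 1 :=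
    (Matrix.mem_unitaryGroup_iff').mp hM.1.eigenvectorUnitary.2
  have hspec := hM.1.spectral_theorem
  rw [Unitary.conjStarAlgAut_apply] at hspec
  have hdd : diagonal (Real.sqrt ∘ hM.1.eigenvalues) * diagonal (Real.sqrt ∘ hM.1.eigenvalues)
      = diagonal (RCLike.ofReal ∘ hM.1.eigenvalues) := by
    rw [diagonal_mul_diagonal]
    congr 1
    funext i
    simp [Real.mul_self_sqrt (hM.eigenvalues_nonneg i)]
  conv_rhs => rw [hspec]
  rw [← hdd]
  simp only [Matrix.PosSemidef.sqrt, Matrix.mul_assoc]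
  rw [← Matrix.mul_assoc (star _) _ (_ * _), hU1, Matrix.one_mul]

theorem Matrix.PosSemidef.posSemidef_sqrt {n : ℕ} {M : Matrix (Fin n) (Fin n) ℝ}
    (hM : M.PosSemidef) : hM.sqrt.PosSemidef := by
  have hD : (diagonal (Real.sqrt ∘ hM.1.eigenvalues)).PosSemidef :=
    Matrix.PosSemidef.diagonal (fun i => Real.sqrt_nonneg _)
  have := hD.mul_mul_conjTranspose_same (hM.1.eigenvectorUnitary : Matrix (Fin n) (Fin n) ℝ)
  simpa [Matrix.PosSemidef.sqrt, Matrix.star_eq_conjTranspose] using this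

theorem commute_sqrt (n : ℕ) (M : Matrix (Fin n) (Fin n) ℝ) (hM : M.PosSemidef)
    (C : Matrix (Fin n) (Fin n) ℝ) (hC : C * M = M * C) :
    C * hM.sqrt = hM.sqrt * C := by
  set U : Matrix (Fin n) (Fin n) ℝ := hM.1.eigenvectorUnitary.1 with hU
  have hU1 : star U * U = 1 := (Matrix.mem_unitaryGroup_iff').mp hM.1.eigenvectorUnitary.2
  have hU2 : U * star U = 1 := (Matrix.mem_unitaryGroup_iff).mp hM.1.eigenvectorUnitary.2
  set d : Fin n → ℝ := hM.1.eigenvalues with hd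
  have hspec : star U * M * U = diagonal d := by
    have := hM.1.conjStarAlgAut_star_eigenvectorUnitary
    simpa using this
  set N : Matrix (Fin n) (Fin n) ℝ := star U * C * U with hN
  have hcomm : N * diagonal d = diagonal d * N := by
    rw [hN, ← hspec]
    calc (star U * C * U) * (star U * M * U)
        = star U * (C * (U * star U) * M) * U := by
          simp only [Matrix.mul_assoc]
      _ = star U * (C * M) * U := by rw [hU2]; simp only [Matrix.mul_one, Matrix.mul_assoc]
      _ = star U * (M * C) * U := by rw [hC]
      _ = star U * (M * (U * star U) * C) * U := by
          rw [hU2]; simp only [Matrix.mul_one, Matrix.mul_assoc]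
      _ = (star U * M * U) * (star U * C * U) := by simp only [Matrix.mul_assoc]
  have hentry : ∀ i j, N i j * d j = d i * N i j := by
    intro i j
    have := congrFun (congrFun hcomm i) j
    simpa [Matrix.mul_diagonal, Matrix.diagonal_mul] using this
  have hsq : N * diagonal (Real.sqrt ∘ d) = diagonal (Real.sqrt ∘ d) * N := by
    ext i j
    simp only [Matrix.mul_diagonal, Matrix.diagonal_mul, Function.comp_apply]
    rcases eq_or_ne (N i j) 0 with h | h
    · simp [h]
    · have hij : d j = d i := by
        have h2 : d j * N i j = d i * N i j := by rw [mul_comm (d j)]; exact hentry i j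
        exact mul_right_cancel₀ h h2
      rw [hij]; ring
  have hsqrt : hM.sqrt = U * diagonal (Real.sqrt ∘ d) * star U := by
    rw [Matrix.PosSemidef.sqrt]
  have hCU : C = U * N * star U := by
    rw [hN]
    calc C = (U * star U) * C * (U * star U) := by rw [hU2]; simp
      _ = U * (star U * C * U) * star U := by simp only [Matrix.mul_assoc]
  rw [hsqrt]
  conv_lhs => rw [hCU]
  conv_rhs => rw [hCU]
  calc U * N * star U * (U * diagonal (Real.sqrt ∘ d) * star U)
      = U * (N * (star U * U) * diagonal (Real.sqrt ∘ d)) * star U := by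
        simp only [Matrix.mul_assoc]
    _ = U * (N * diagonal (Real.sqrt ∘ d)) * star U := by
        rw [hU1]; simp only [Matrix.mul_one, Matrix.mul_assoc]
    _ = U * (diagonal (Real.sqrt ∘ d) * N) * star U := by rw [hsq]
    _ = U * (diagonal (Real.sqrt ∘ d) * (star U * U) * N) * star U := by
        rw [hU1]; simp only [Matrix.mul_one, Matrix.mul_assoc]
    _ = U * diagonal (Real.sqrt ∘ d) * star U * (U * N * star U) := by
        simp only [Matrix.mul_assoc]


/-- eigenvector scaling lemma (Barth). If A = RΛR⁻¹ is diagonalizable over ℝ,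
B is symmetric positive definite and AB is symmetric, then there is a symmetric invertible
matrix T commuting with Λ (hence block diagonal w.r.t. the eigenspaces of Λ) such that with
R̃ = RT one has B = R̃R̃ᵀ, A = R̃ΛR̃⁻¹ and consequently AB = R̃ΛR̃ᵀ. -/
theorem eigenvector_scaling (n : ℕ) (hn : 1 ≤ n)
    (A B R Λ : Matrix (Fin n) (Fin n) ℝ)
    (hΛ : Λ.IsDiag) (hR : IsUnit R) (hA : A = R * Λ * R⁻¹)
    (hB : B.PosDef) (hAB : (A * B).IsSymm) :
    ∃ T : Matrix (Fin n) (Fin n) ℝ, T.IsSymm ∧ IsUnit T ∧ T * Λ = Λ * T ∧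
      B = (R * T) * (R * T)ᵀ ∧ A = (R * T) * Λ * (R * T)⁻¹ ∧
      A * B = (R * T) * Λ * (R * T)ᵀ := by
  have hRd : IsUnit R.det := (isUnit_iff_isUnit_det R).mp hR
  have hRi : R * R⁻¹ = 1 := Matrix.mul_nonsing_inv R hRd
  have hiR : R⁻¹ * R = 1 := Matrix.nonsing_inv_mul R hRd
  have hH : (R⁻¹)ᴴ = (R⁻¹)ᵀ := by ext i j; simp [Matrix.conjTranspose_apply]
  have hTi : (R⁻¹)ᵀ * Rᵀ = 1 := by rw [← Matrix.transpose_mul, hRi, Matrix.transpose_one]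
  have hiT : Rᵀ * (R⁻¹)ᵀ = 1 := by rw [← Matrix.transpose_mul, hiR, Matrix.transpose_one]
  set M : Matrix (Fin n) (Fin n) ℝ := R⁻¹ * B * (R⁻¹)ᴴ with hM
  have hMps : M.PosSemidef := hB.posSemidef.mul_mul_conjTranspose_same R⁻¹
  have hΛsymm : Λᵀ = Λ := by
    ext i j
    rcases eq_or_ne i j with rfl | h
    · simp
    · rw [Matrix.transpose_apply, hΛ h, hΛ (Ne.symm h)]
  have hBT : Bᵀ = B := by
    have := hB.1
    rwa [Matrix.IsHermitian, Matrix.conjTranspose_eq_transpose_of_trivial] at this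
  have hABs : A * B = B * Aᵀ := by
    have h2 := hAB
    rw [Matrix.IsSymm, Matrix.transpose_mul, hBT] at h2
    exact h2.symm
  have hAT : Aᵀ = (R⁻¹)ᵀ * Λ * Rᵀ := by
    rw [hA, Matrix.transpose_mul, Matrix.transpose_mul, hΛsymm, Matrix.mul_assoc]
  have hC : Λ * M = M * Λ := by
    have key : R * Λ * R⁻¹ * B = B * ((R⁻¹)ᵀ * Λ * Rᵀ) := by rw [← hA, ← hAT]; exact hABs
    rw [hM, hH]
    calc Λ * (R⁻¹ * B * (R⁻¹)ᵀ)
        = R⁻¹ * (R * Λ * R⁻¹ * B) * (R⁻¹)ᵀ := by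
          simp only [← Matrix.mul_assoc, hiR, Matrix.one_mul]
      _ = R⁻¹ * (B * ((R⁻¹)ᵀ * Λ * Rᵀ)) * (R⁻¹)ᵀ := by rw [key]
      _ = R⁻¹ * B * (R⁻¹)ᵀ * Λ * (Rᵀ * (R⁻¹)ᵀ) := by simp only [Matrix.mul_assoc]
      _ = R⁻¹ * B * (R⁻¹)ᵀ * Λ := by rw [hiT, Matrix.mul_one]
  set T : Matrix (Fin n) (Fin n) ℝ := hMps.sqrt with hT
  have hTT : T * T = M := hMps.sqrt_mul_self
  have hTsymm : T.IsSymm := by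
    have := hMps.posSemidef_sqrt.1
    rwa [Matrix.IsHermitian, Matrix.conjTranspose_eq_transpose_of_trivial] at this
  have hMunit : IsUnit M := by
    rw [isUnit_iff_isUnit_det, hM, hH, Matrix.det_mul, Matrix.det_mul, Matrix.det_transpose,
      Matrix.det_nonsing_inv]
    rw [Ring.inverse_eq_inv']
    exact (mul_ne_zero (mul_ne_zero (inv_ne_zero hRd.ne_zero) hB.det_pos.ne')
      (inv_ne_zero hRd.ne_zero)).isUnit
  have hTunit : IsUnit T := by
    rw [isUnit_iff_isUnit_det]
    have : IsUnit (T.det * T.det) := by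
      rw [← Matrix.det_mul, hTT]; exact (isUnit_iff_isUnit_det M).mp hMunit
    exact isUnit_of_mul_isUnit_left this
  have hTd : IsUnit T.det := (isUnit_iff_isUnit_det T).mp hTunit
  have hTiT : T * T⁻¹ = 1 := Matrix.mul_nonsing_inv T hTd
  have hiTT : T⁻¹ * T = 1 := Matrix.nonsing_inv_mul T hTd
  have hcomm : T * Λ = Λ * T := (commute_sqrt n M hMps Λ hC).symm
  refine ⟨T, hTsymm, hTunit, hcomm, ?_, ?_, ?_⟩
  · -- B = (R * T) * (R * T)ᵀ
    rw [Matrix.transpose_mul, hTsymm.eq]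
    calc B = (R * R⁻¹) * B * ((R⁻¹)ᵀ * Rᵀ) := by rw [hRi, hTi]; simp
      _ = R * (R⁻¹ * B * (R⁻¹)ᵀ) * Rᵀ := by simp only [Matrix.mul_assoc]
      _ = R * (T * T) * Rᵀ := by rw [← hH, ← hM, hTT]
      _ = R * T * (T * Rᵀ) := by simp only [Matrix.mul_assoc]
  · -- A = (R * T) * Λ * (R * T)⁻¹
    rw [Matrix.mul_inv_rev, hA]
    calc R * Λ * R⁻¹ = R * (Λ * (T * T⁻¹)) * R⁻¹ := by rw [hTiT]; simp [Matrix.mul_assoc]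
      _ = R * ((Λ * T) * T⁻¹) * R⁻¹ := by simp only [Matrix.mul_assoc]
      _ = R * ((T * Λ) * T⁻¹) * R⁻¹ := by rw [hcomm]
      _ = R * T * Λ * (T⁻¹ * R⁻¹) := by simp only [Matrix.mul_assoc]
  · -- A * B = (R * T) * Λ * (R * T)ᵀ
    rw [Matrix.transpose_mul, hTsymm.eq, hA]
    calc R * Λ * R⁻¹ * B
        = R * Λ * (R⁻¹ * B * (R⁻¹)ᵀ) * Rᵀ := by
          conv_lhs => rw [show B = B * ((R⁻¹)ᵀ * Rᵀ) from by rw [hTi, Matrix.mul_one]]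
          simp only [Matrix.mul_assoc]
      _ = R * (Λ * (T * T)) * Rᵀ := by rw [← hH, ← hM, hTT]; simp only [Matrix.mul_assoc]
      _ = R * ((Λ * T) * T) * Rᵀ := by simp only [Matrix.mul_assoc]
      _ = R * ((T * Λ) * T) * Rᵀ := by rw [hcomm]
      _ = R * T * Λ * (T * Rᵀ) := by simp only [Matrix.mul_assoc]
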